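/- arXiv:2507.01303 — 2 statements merged into one kernel-verified Lean document; each statement's English description precedes it below -/
import Mathlib

section
/- Let P be a poset, and let I and J be distinct intervals in P. Let g : M(I) → M(J) and h : M(J) → M(I) be morphisms of persistence modules. Then h ∘ g = 0. -/
universe u v w w'

/-- A persistence module indexed by a poset `P`, over a field `k`. -/
structure PersMod (k : Type u) [Field k] (P : Type v) [PartialOrder P] :
    Type (max u v (w + 1)) where
  space : P → Type w
  [acg : ∀ x, AddCommGroup (space x)]
  [mod : ∀ x, Module k (space x)]
  map : ∀ {x y : P}, x ≤ y → (space x →ₗ[k] space y)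
  map_id : ∀ x : P, map (le_refl x) = LinearMap.id
  map_comp : ∀ {x y z : P} (hxy : x ≤ y) (hyz : y ≤ z),
    (map hyz).comp (map hxy) = map (hxy.trans hyz)

attribute [instance] PersMod.acg PersMod.mod

variable (k : Type u) [Field k] {P : Type v} [PartialOrder P]

/-- A morphism of persistence modules (a natural transformation). -/
structure PersHom (V : PersMod.{u, v, w} k P) (W : PersMod.{u, v, w'} k P) where
  app : ∀ x : P, V.space x →ₗ[k] W.space x
  natural : ∀ {x y : P} (h : x ≤ y) (v : V.space x),
    app y (V.map h v) = W.map h (app x v)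

/-- An isomorphism of persistence modules. -/
structure PersIso (V : PersMod.{u, v, w} k P) (W : PersMod.{u, v, w'} k P) where
  app : ∀ x : P, V.space x ≃ₗ[k] W.space x
  natural : ∀ {x y : P} (h : x ≤ y) (v : V.space x),
    app y (V.map h v) = W.map h (app x v)

/-- A subset `I` of a poset is convex if `x ≤ y ≤ z`, `x ∈ I`, `z ∈ I` imply `y ∈ I`. -/
def IsConvexIn (I : Set P) : Prop :=
  ∀ ⦃x y z : P⦄, x ∈ I → z ∈ I → x ≤ y → y ≤ z → y ∈ I

/-- A subset `I` of a poset is connected if any two points of `I` are joined by a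
zigzag path inside `I`. -/
def IsConnectedIn (I : Set P) : Prop :=
  ∀ x ∈ I, ∀ z ∈ I, ∃ (n : ℕ) (c : ℕ → P), (∀ i ≤ n, c i ∈ I) ∧ c 0 = x ∧ c n = z ∧
    ∀ i < n, c i ≤ c (i + 1) ∨ c (i + 1) ≤ c i

/-- An interval in a poset: nonempty, convex and connected. -/
def IsPosetInterval (I : Set P) : Prop :=
  I.Nonempty ∧ IsConvexIn I ∧ IsConnectedIn I

open Classical in
/-- The subspace of `k` used as the value of the constant module at `x`. -/
noncomputable def constSub (I : Set P) (x : P) : Submodule k k :=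
  if x ∈ I then ⊤ else ⊥

open Classical in
/-- The structure map of the constant module. -/
noncomputable def constMap (I : Set P) (x y : P) :
    constSub k I x →ₗ[k] constSub k I y :=
  LinearMap.codRestrict (constSub k I y)
    ((if y ∈ I then (LinearMap.id : k →ₗ[k] k) else 0).comp (constSub k I x).subtype)
    (fun c => by
      by_cases hy : y ∈ I
      · simp [constSub, hy]
      · simp only [constSub, hy, ↓reduceIte, LinearMap.zero_comp]
        exact Submodule.zero_mem _)

open Classical in
/-- The constant (interval) module `M(I)` attached to a convex subset `I`. -/
noncomputable def constMod (I : Set P) (hI : IsConvexIn I) : PersMod.{u, v, u} k P where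
  space x := constSub k I x
  map {x y} _ := constMap k I x y
  map_id := fun x => by
    ext c
    by_cases hx : x ∈ I
    · simp [constMap, hx]
    · have hc : (c : k) = 0 := by
        have := c.2
        simp only [constSub, hx, ↓reduceIte] at this
        exact (Submodule.mem_bot k).1 this
      simp [constMap, hx, hc]
  map_comp := fun {x y z} hxy hyz => by
    ext c
    by_cases hz : z ∈ I
    · by_cases hy : y ∈ I
      · simp [constMap, hy, hz]
      · have hx : x ∉ I := fun hx => hy (hI hx hz hxy hyz)
        have hc : (c : k) = 0 := by
          have := c.2
          simp only [constSub, hx, ↓reduceIte] at this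
          exact (Submodule.mem_bot k).1 this
        simp [constMap, hy, hz, hc]
    · simp [constMap, hz]

/-- A submodule of a persistence module: a family of subspaces preserved by the
structure maps. -/
structure PersSubmod (V : PersMod.{u, v, w} k P) where
  carrier : ∀ x : P, Submodule k (V.space x)
  mapLe : ∀ {x y : P} (h : x ≤ y), ∀ v ∈ carrier x, V.map h v ∈ carrier y

/-- A submodule of a persistence module, viewed as a persistence module in its own
right. -/
def PersSubmod.toPersMod {V : PersMod.{u, v, w} k P} (U : PersSubmod k V) :
    PersMod.{u, v, w} k P where
  space x := U.carrier x
  map {x y} h := (V.map h).restrict (U.mapLe h)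
  map_id := fun x => by
    ext c
    simp [LinearMap.restrict_apply, V.map_id]
  map_comp := fun {x y z} hxy hyz => by
    ext c
    have := LinearMap.congr_fun (V.map_comp hxy hyz) (c : V.space x)
    simpa [LinearMap.restrict_apply] using this

/-- A persistence module is an interval module if it is isomorphic to a constant
module `M(I)` for some interval `I`. -/
def IsIntervalModule (V : PersMod.{u, v, w} k P) : Prop :=
  ∃ (I : Set P) (hI : IsPosetInterval I), Nonempty (PersIso k V (constMod k I hI.2.1))

/-- `A` is an internal direct sum decomposition of `V`:
at each point the subspaces are independent and span everything. -/
def IsDecomp (V : PersMod.{u, v, w} k P) (A : Set (PersSubmod k V)) : Prop :=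
  ∀ x : P, iSupIndep (fun U : A => (U : PersSubmod k V).carrier x) ∧
    ⨆ U : A, (U : PersSubmod k V).carrier x = ⊤

/-- An interval decomposition of `V`. -/
def IsIntervalDecomp (V : PersMod.{u, v, w} k P) (A : Set (PersSubmod k V)) : Prop :=
  IsDecomp k V A ∧ ∀ U ∈ A, IsIntervalModule k U.toPersMod

/-- `V` has an interval decomposition. -/
def HasIntervalDecomp (V : PersMod.{u, v, w} k P) : Prop :=
  ∃ A : Set (PersSubmod k V), IsIntervalDecomp k V A

/-- The underlying scalar of an element of the constant module. -/
noncomputable def elVal {I : Set P} {x : P} (v : constSub k I x) : k := v.1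

@[simp] lemma elVal_def {I : Set P} {x : P} (v : constSub k I x) : elVal k v = v.1 := rfl

/-- The distinguished generator of the constant module at a point of `I`. -/
noncomputable def oneEl (I : Set P) {x : P} (hx : x ∈ I) : constSub k I x :=
  ⟨1, by simp [constSub, hx]⟩

lemma constSub_eq_zero {I : Set P} {x : P} (hx : x ∉ I) (v : constSub k I x) :
    v = 0 := by
  have := v.2
  simp only [constSub, if_neg hx, Submodule.mem_bot] at this
  exact Subtype.ext this

lemma eq_smul_oneEl {I : Set P} {x : P} (hx : x ∈ I) (v : constSub k I x) :
    v = (v : k) • oneEl k I hx := by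
  apply Subtype.ext
  simp [oneEl]

lemma constMod_map_oneEl {I : Set P} (hc : IsConvexIn I) {x y : P} (hxy : x ≤ y)
    (hx : x ∈ I) (hy : y ∈ I) :
    (constMod k I hc).map hxy (oneEl k I hx) = oneEl k I hy := by
  apply Subtype.ext
  simp [constMod, constMap, oneEl, hy]
  rfl

/-- The composite of two morphisms between constant modules. -/
noncomputable def compConstHom {I J : Set P} (hcI : IsConvexIn I) (hcJ : IsConvexIn J)
    (g : PersHom k (constMod k I hcI) (constMod k J hcJ))
    (h : PersHom k (constMod k J hcJ) (constMod k I hcI)) :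
    PersHom k (constMod k I hcI) (constMod k I hcI) where
  app x := (h.app x).comp (g.app x)
  natural := fun {x y} hxy v => by
    simp only [LinearMap.comp_apply, g.natural hxy v, h.natural hxy (g.app x v)]

lemma endo_val_step {I : Set P} (hc : IsConvexIn I)
    (φ : PersHom k (constMod k I hc) (constMod k I hc))
    {x y : P} (hxy : x ≤ y) (hx : x ∈ I) (hy : y ∈ I) :
    elVal k (φ.app x (oneEl k I hx))
      = elVal k (φ.app y (oneEl k I hy)) := by
  have hnat := φ.natural hxy (oneEl k I hx)
  rw [constMod_map_oneEl k hc hxy hx hy] at hnat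
  have hval : elVal k ((constMod k I hc).map hxy (φ.app x (oneEl k I hx)))
      = elVal k (φ.app x (oneEl k I hx)) := by
    simp [constMod, constMap, hy]
    rfl
  rw [hnat, hval]

lemma endo_val_congr {I : Set P} (hc : IsConvexIn I)
    (φ : PersHom k (constMod k I hc) (constMod k I hc))
    {x y : P} (e : x = y) (hx : x ∈ I) (hy : y ∈ I) :
    elVal k (φ.app x (oneEl k I hx))
      = elVal k (φ.app y (oneEl k I hy)) := by
  subst e; rfl

lemma endo_val_const {I : Set P} (hI : IsPosetInterval I)
    (φ : PersHom k (constMod k I hI.2.1) (constMod k I hI.2.1))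
    {x y : P} (hx : x ∈ I) (hy : y ∈ I) :
    elVal k (φ.app x (oneEl k I hx))
      = elVal k (φ.app y (oneEl k I hy)) := by
  obtain ⟨n, c, hmem, h0, hn, hadj⟩ := hI.2.2 x hx y hy
  have key : ∀ i, ∀ hi : i ≤ n, elVal k (φ.app x (oneEl k I hx))
      = elVal k (φ.app (c i) (oneEl k I (hmem i hi))) := by
    intro i
    induction i with
    | zero =>
      intro hi
      exact endo_val_congr k hI.2.1 φ h0.symm hx (hmem 0 hi)
    | succ m ih =>
      intro hi
      have hm : m ≤ n := Nat.le_of_succ_le hi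
      have hlt : m < n := hi
      have h1 := ih hm
      rcases hadj m hlt with hle | hle
      · rw [h1, endo_val_step k hI.2.1 φ hle (hmem m hm) (hmem (m + 1) hi)]
      · rw [h1, endo_val_step k hI.2.1 φ hle (hmem (m + 1) hi) (hmem m hm)]
  have := key n le_rfl
  rw [this]
  exact endo_val_congr k hI.2.1 φ hn (hmem n le_rfl) hy

lemma comp_val_eq_mul {I J : Set P} (hcI : IsConvexIn I) (hcJ : IsConvexIn J)
    (g : PersHom k (constMod k I hcI) (constMod k J hcJ))
    (h : PersHom k (constMod k J hcJ) (constMod k I hcI))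
    {x : P} (hxI : x ∈ I) (hxJ : x ∈ J) :
    elVal k ((compConstHom k hcI hcJ g h).app x (oneEl k I hxI))
      = elVal k (g.app x (oneEl k I hxI))
        * elVal k (h.app x (oneEl k J hxJ)) := by
  have h1 : g.app x (oneEl k I hxI)
      = elVal k (g.app x (oneEl k I hxI)) • oneEl k J hxJ :=
    eq_smul_oneEl k hxJ _
  show elVal k (h.app x (g.app x (oneEl k I hxI))) = _
  conv_lhs => rw [h1]
  exact congrArg Subtype.val ((h.app x).map_smul (elVal k (g.app x (oneEl k I hxI))) (oneEl k J hxJ))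

lemma comp_val_eq_zero {I J : Set P} (hcI : IsConvexIn I) (hcJ : IsConvexIn J)
    (g : PersHom k (constMod k I hcI) (constMod k J hcJ))
    (h : PersHom k (constMod k J hcJ) (constMod k I hcI))
    {x : P} (hxI : x ∈ I) (hxJ : x ∉ J) :
    elVal k ((compConstHom k hcI hcJ g h).app x (oneEl k I hxI)) = 0 := by
  have h0 : g.app x (oneEl k I hxI) = 0 := constSub_eq_zero k hxJ _
  show elVal k (h.app x (g.app x (oneEl k I hxI))) = 0
  rw [h0]
  simp
  rfl

lemma subset_of_val_ne_zero {I J : Set P} (hI : IsPosetInterval I) (hJ : IsPosetInterval J)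
    (g : PersHom k (constMod k I hI.2.1) (constMod k J hJ.2.1))
    (h : PersHom k (constMod k J hJ.2.1) (constMod k I hI.2.1))
    {x : P} (hx : x ∈ I)
    (hne : elVal k ((compConstHom k hI.2.1 hJ.2.1 g h).app x (oneEl k I hx))
      ≠ 0) : I ⊆ J := by
  intro y hy
  by_contra hyJ
  have h0 := comp_val_eq_zero k hI.2.1 hJ.2.1 g h hy hyJ
  have hconst := endo_val_const k hI (compConstHom k hI.2.1 hJ.2.1 g h) hx hy
  exact hne (hconst.trans h0)

/-- If `I` and `J` are distinct intervals, `g : M(I) → M(J)` and `h : M(J) → M(I)`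
are morphisms, then `h ∘ g = 0`. -/
theorem comp_eq_zero_of_distinct_intervals (P : Type v) [PartialOrder P]
    (I J : Set P) (hI : IsPosetInterval I) (hJ : IsPosetInterval J) (hIJ : I ≠ J)
    (g : PersHom k (constMod k I hI.2.1) (constMod k J hJ.2.1))
    (h : PersHom k (constMod k J hJ.2.1) (constMod k I hI.2.1)) :
    ∀ (x : P) (c : (constMod k I hI.2.1).space x), h.app x (g.app x c) = 0 := by
  intro x c
  by_cases hx : x ∈ I
  · have hval : elVal k ((compConstHom k hI.2.1 hJ.2.1 g h).app x (oneEl k I hx)) = 0 := by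
      by_contra hne
      have hIsubJ : I ⊆ J := subset_of_val_ne_zero k hI hJ g h hx hne
      have hxJ : x ∈ J := hIsubJ hx
      have hmul := comp_val_eq_mul k hI.2.1 hJ.2.1 g h hx hxJ
      have hmul' := comp_val_eq_mul k hJ.2.1 hI.2.1 h g hxJ hx
      have hne' : elVal k ((compConstHom k hJ.2.1 hI.2.1 h g).app x (oneEl k J hxJ)) ≠ 0 := by
        rw [hmul', mul_comm, ← hmul]
        exact hne
      have hJsubI : J ⊆ I := subset_of_val_ne_zero k hJ hI h g hxJ hne'
      exact hIJ (Set.Subset.antisymm hIsubJ hJsubI)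
    have hone : h.app x (g.app x (oneEl k I hx)) = 0 := Subtype.ext hval
    have hc : h.app x (g.app x c) = elVal k c • (h.app x (g.app x (oneEl k I hx))) := by
      conv_lhs => rw [eq_smul_oneEl k hx c]
      exact (congrArg (h.app x) ((g.app x).map_smul _ _)).trans ((h.app x).map_smul _ _)
    rw [hc, hone, smul_zero]
  · have hc0 : c = 0 := constSub_eq_zero k hx c
    rw [hc0, map_zero, map_zero]
end

section
/- (Steinberg's lemma.) Let E be a finite dimensional k-vector space, and let F and G be flags in E. Then there exists a basis of E which is compatible with both F and G. -/
universe u v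

open Submodule Set Module

section SteinbergAux

variable {k : Type u} [Field k] {E : Type v} [AddCommGroup E] [Module k E]

/-- A chain of submodules of a finite dimensional space is finite. -/
lemma steinberg_chain_finite [FiniteDimensional k E] {G : Set (Submodule k E)}
    (hG : IsChain (· ≤ ·) G) : G.Finite := by
  apply Set.Finite.of_finite_image (f := fun S : Submodule k E => finrank k S)
  · exact (Set.finite_Iic (finrank k E)).subset
      (by rintro _ ⟨S, _, rfl⟩; exact Submodule.finrank_le S)
  · intro a ha b hb hab
    rcases hG.total ha hb with h | h
    · exact Submodule.eq_of_le_of_finrank_le h (le_of_eq (by simpa using hab.symm))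
    · exact (Submodule.eq_of_le_of_finrank_le h (le_of_eq (by simpa using hab))).symm

lemma steinberg_mem_of_mem_span {B B' : Set E}
    (hB : LinearIndependent k ((↑) : B → E)) (hsub : B' ⊆ B)
    {x : E} (hxB : x ∈ B) (hx : x ∈ span k B') : x ∈ B' := by
  by_contra hxB'
  have hins : LinearIndependent k (fun y : ↥(insert x B') => (y : E)) :=
    LinearIndepOn.mono (v := id) hB (Set.insert_subset hxB hsub)
  exact ((linearIndepOn_id_insert hxB').1 hins).2 hx

lemma steinberg_inter_eq {B B' : Set E} {H : Submodule k E}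
    (hB : LinearIndependent k ((↑) : B → E)) (hsub : B' ⊆ B)
    (hspan : span k B' = H) : B ∩ ↑H = B' := by
  apply subset_antisymm
  · rintro x ⟨hxB, hxH⟩
    exact steinberg_mem_of_mem_span hB hsub hxB (by rw [hspan]; exact hxH)
  · exact subset_inter hsub (by rw [← hspan]; exact Submodule.subset_span)

/-- Extension step with no flag: extend a basis of `H₀` to one of `H`. -/
lemma steinberg_ext0 (H₀ H : Submodule k E) (B' : Set E) (hle : H₀ ≤ H)
    (hB' : LinearIndependent k ((↑) : B' → E)) (hspan : span k B' = H₀) :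
    ∃ B : Set E, B' ⊆ B ∧ B ⊆ ↑H ∧ LinearIndependent k ((↑) : B → E) ∧
      span k B = H := by
  have hsub : B' ⊆ ↑H := fun x hx => hle (hspan ▸ Submodule.subset_span hx)
  obtain ⟨B, hBH, hB'B, hHspan, hBli⟩ := exists_linearIndepOn_id_extension hB' hsub
  exact ⟨B, hB'B, hBH, hBli, le_antisymm (span_le.2 hBH) (fun x hx => hHspan hx)⟩

/-- Extension lemma: a linearly independent set spanning `H₀ ≤ H`, compatible with the
restriction of a finite chain `G` to `H₀`, extends to one spanning `H` compatible with
the restriction of `G` to `H`. Induction on the cardinality of `G`. -/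
lemma steinberg_ext (n : ℕ) :
    ∀ (G : Set (Submodule k E)), IsChain (· ≤ ·) G → G.Finite → G.ncard ≤ n →
    ∀ (H₀ H : Submodule k E) (B' : Set E), H₀ ≤ H →
    LinearIndependent k ((↑) : B' → E) → span k B' = H₀ →
    (∀ S ∈ G, span k (B' ∩ ↑S) = S ⊓ H₀) →
    ∃ B : Set E, B' ⊆ B ∧ B ⊆ ↑H ∧ LinearIndependent k ((↑) : B → E) ∧
      span k B = H ∧ ∀ S ∈ G, span k (B ∩ ↑S) = S ⊓ H := by
  induction n with
  | zero =>
    intro G hGchain hGfin hGcard H₀ H B' hH₀H hB' hspan _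
    have hGe : G = ∅ := by
      rw [← Set.ncard_eq_zero hGfin]; omega
    subst hGe
    obtain ⟨B, h1, h2, h3, h4⟩ := steinberg_ext0 H₀ H B' hH₀H hB' hspan
    exact ⟨B, h1, h2, h3, h4, by simp⟩
  | succ n ih =>
    intro G hGchain hGfin hGcard H₀ H B' hH₀H hB' hspan hcomp
    rcases G.eq_empty_or_nonempty with hGe | ⟨T₀, hT₀⟩
    · subst hGe
      obtain ⟨B, h1, h2, h3, h4⟩ := steinberg_ext0 H₀ H B' hH₀H hB' hspan
      exact ⟨B, h1, h2, h3, h4, by simp⟩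
    · obtain ⟨T, _, hTmin⟩ := Set.Finite.exists_le_minimal hGfin hT₀
      have hTG : T ∈ G := hTmin.1
      have hTle : ∀ S ∈ G, T ≤ S := by
        intro S hS
        rcases hGchain.total hTG hS with h | h
        · exact h
        · exact hTmin.2 hS h
      -- extend B' inside B' ∪ (T ⊓ H)
      have hsubB' : B' ⊆ B' ∪ ↑(T ⊓ H) := subset_union_left
      obtain ⟨B₁, hB₁sub, hB'B₁, hspan₁, hB₁li⟩ :=
        exists_linearIndepOn_id_extension hB' hsubB'
      set C := B₁ \ B' with hCdef
      have hCsub : C ⊆ ↑(T ⊓ H) := fun x hx => (hB₁sub hx.1).resolve_left hx.2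
      have hB₁eq : B₁ = B' ∪ C := (union_diff_cancel hB'B₁).symm
      have hB'sub₀ : B' ⊆ ↑H₀ := fun x hx => hspan ▸ Submodule.subset_span hx
      have hspanC : span k C ≤ T ⊓ H := by
        rw [← Submodule.span_eq (T ⊓ H)]; exact span_mono hCsub
      have hspanB₁ : span k B₁ = H₀ ⊔ (T ⊓ H) := by
        apply le_antisymm
        · rw [span_le]
          intro x hx
          rcases hB₁sub hx with h | h
          · exact Submodule.mem_sup_left (hB'sub₀ h)
          · exact Submodule.mem_sup_right h
        · apply sup_le
          · rw [← hspan, span_le]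
            exact fun x hx => hspan₁ (Or.inl hx)
          · exact fun x hx => hspan₁ (Or.inr hx)
      -- key compatibility fact for B₁
      have key : ∀ S ∈ G, span k (B₁ ∩ ↑S) = S ⊓ (H₀ ⊔ (T ⊓ H)) := by
        intro S hS
        have hTS : T ≤ S := hTle S hS
        have hTHS : T ⊓ H ≤ S := le_trans inf_le_left hTS
        have hmod : S ⊓ (H₀ ⊔ (T ⊓ H)) = (S ⊓ H₀) ⊔ (T ⊓ H) := by
          rw [sup_comm H₀ (T ⊓ H), inf_comm S, sup_inf_assoc_of_le H₀ hTHS,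
            inf_comm H₀ S, sup_comm]
        apply le_antisymm
        · apply le_inf
          · exact span_le.2 inter_subset_right
          · rw [← hspanB₁]
            exact span_mono inter_subset_left
        · rw [hmod]
          apply sup_le
          · rw [← hcomp S hS]
            exact span_mono (inter_subset_inter_left _ hB'B₁)
          · -- T ⊓ H ≤ span (B₁ ∩ S)
            intro x hx
            have hx' : x ∈ span k B' ⊔ span k C := by
              rw [← span_union, ← hB₁eq, hspanB₁]
              exact Submodule.mem_sup_right hx
            obtain ⟨y, hy, z, hz, hyz⟩ := Submodule.mem_sup.1 hx'
            have hzTH : z ∈ T ⊓ H := hspanC hz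
            have hyT : y ∈ T ⊓ H₀ := by
              constructor
              · have hxT : x ∈ T := hx.1
                have : y = x - z := eq_sub_of_add_eq hyz
                rw [this]
                exact T.sub_mem hxT hzTH.1
              · rw [← hspan]; exact hy
            have hyS : y ∈ span k (B₁ ∩ ↑S) := by
              apply span_mono (s := B' ∩ (↑T : Set E))
              · intro w hw
                exact ⟨hB'B₁ hw.1, hTS hw.2⟩
              · rw [hcomp T hTG]; exact hyT
            have hzS : z ∈ span k (B₁ ∩ ↑S) := by
              apply span_mono (s := C)
              · intro w hw
                exact ⟨(hB₁eq ▸ Or.inr hw : w ∈ B₁), hTHS (hCsub hw)⟩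
              · exact hz
            rw [← hyz]
            exact Submodule.add_mem _ hyS hzS
      -- apply the induction hypothesis to G \ {T}
      have hG'chain : IsChain (· ≤ ·) (G \ {T}) := hGchain.mono diff_subset
      have hG'fin : (G \ {T}).Finite := hGfin.diff
      have hG'card : (G \ {T}).ncard ≤ n := by
        have := Set.ncard_diff_singleton_lt_of_mem hTG hGfin
        omega
      have hH₁H : H₀ ⊔ (T ⊓ H) ≤ H := sup_le hH₀H inf_le_right
      obtain ⟨B, hB₁B, hBH, hBli, hBspan, hBcomp⟩ :=
        ih (G \ {T}) hG'chain hG'fin hG'card (H₀ ⊔ (T ⊓ H)) H B₁ hH₁H hB₁li hspanB₁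
          (fun S hS => key S hS.1)
      refine ⟨B, hB'B₁.trans hB₁B, hBH, hBli, hBspan, ?_⟩
      intro S hS
      by_cases hST : S = T
      · subst hST
        apply le_antisymm
        · apply le_inf
          · exact span_le.2 inter_subset_right
          · rw [← hBspan]; exact span_mono inter_subset_left
        · have h1 : S ⊓ H ≤ span k (B₁ ∩ ↑S) := by
            rw [key S hS]
            exact le_inf inf_le_left le_sup_right
          exact h1.trans (span_mono (inter_subset_inter_left _ hB₁B))
      · exact hBcomp S ⟨hS, hST⟩

/-- Main auxiliary lemma: induction on the cardinality of `F`. -/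
lemma steinberg_aux [FiniteDimensional k E] (n : ℕ) :
    ∀ (F : Set (Submodule k E)), IsChain (· ≤ ·) F → F.ncard ≤ n →
    ∀ (G : Set (Submodule k E)), IsChain (· ≤ ·) G →
    ∀ H : Submodule k E, (∀ S ∈ F, S ≤ H) →
    ∃ B : Set E, B ⊆ ↑H ∧ LinearIndependent k ((↑) : B → E) ∧ span k B = H ∧
      (∀ S ∈ F, span k (B ∩ ↑S) = S) ∧ (∀ S ∈ G, span k (B ∩ ↑S) = S ⊓ H) := by
  induction n with
  | zero =>
    intro F hFchain hFcard G hGchain H hFH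
    have hFe : F = ∅ := by
      rw [← Set.ncard_eq_zero (steinberg_chain_finite hFchain)]; omega
    subst hFe
    obtain ⟨B, _, hBH, hBli, hBspan, hBcomp⟩ :=
      steinberg_ext (G.ncard) G hGchain (steinberg_chain_finite hGchain) le_rfl
        ⊥ H ∅ bot_le (linearIndependent_empty k E) (by simp) (by simp)
    exact ⟨B, hBH, hBli, hBspan, by simp, hBcomp⟩
  | succ n ih =>
    intro F hFchain hFcard G hGchain H hFH
    rcases F.eq_empty_or_nonempty with hFe | ⟨M₀, hM₀⟩
    · subst hFe
      obtain ⟨B, _, hBH, hBli, hBspan, hBcomp⟩ :=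
        steinberg_ext (G.ncard) G hGchain (steinberg_chain_finite hGchain) le_rfl
          ⊥ H ∅ bot_le (linearIndependent_empty k E) (by simp) (by simp)
      exact ⟨B, hBH, hBli, hBspan, by simp, hBcomp⟩
    · have hFfin : F.Finite := steinberg_chain_finite hFchain
      obtain ⟨M, _, hMmax⟩ := hFfin.exists_le_maximal hM₀
      have hMF : M ∈ F := hMmax.1
      have hMle : ∀ S ∈ F, S ≤ M := by
        intro S hS
        rcases hFchain.total hS hMF with h | h
        · exact h
        · exact hMmax.2 hS h
      have hF'card : (F \ {M}).ncard ≤ n := by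
        have := Set.ncard_diff_singleton_lt_of_mem hMF hFfin
        omega
      obtain ⟨B', hB'M, hB'li, hB'span, hB'F, hB'G⟩ :=
        ih (F \ {M}) (hFchain.mono diff_subset) hF'card G hGchain M
          (fun S hS => hMle S hS.1)
      obtain ⟨B, hB'B, hBH, hBli, hBspan, hBcomp⟩ :=
        steinberg_ext (G.ncard) G hGchain (steinberg_chain_finite hGchain) le_rfl
          M H B' (hFH M hMF) hB'li hB'span hB'G
      have hBM : B ∩ ↑M = B' := steinberg_inter_eq hBli hB'B hB'span
      refine ⟨B, hBH, hBli, hBspan, ?_, hBcomp⟩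
      intro S hS
      by_cases hSM : S = M
      · subst hSM; rw [hBM, hB'span]
      · have hSle : S ≤ M := hMle S hS
        have hsub' : (↑S : Set E) ⊆ ↑M := fun x hx => hSle hx
        have hBS : B ∩ ↑S = B' ∩ ↑S := by
          rw [← hBM, inter_assoc, inter_eq_self_of_subset_right hsub']
        rw [hBS]
        exact hB'F S ⟨hS, hSM⟩

end SteinbergAux

/-- Steinberg's lemma: given two flags (chains of subspaces) `F` and `G` in a finite
dimensional vector space `E`, there is a basis `B` of `E` compatible with both flags,
i.e. for every subspace `S` in either flag, `B ∩ S` is a basis of `S`. -/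
theorem exists_basis_compatible_with_two_flags
    (k : Type u) [Field k] (E : Type v) [AddCommGroup E] [Module k E]
    [FiniteDimensional k E]
    (F G : Set (Submodule k E))
    (hF : IsChain (· ≤ ·) F) (hG : IsChain (· ≤ ·) G) :
    ∃ B : Set E,
      LinearIndependent k ((↑) : B → E) ∧ Submodule.span k B = ⊤ ∧
      (∀ S ∈ F, Submodule.span k (B ∩ S) = S) ∧
      (∀ S ∈ G, Submodule.span k (B ∩ S) = S) := by
  obtain ⟨B, _, hBli, hBspan, hBF, hBG⟩ :=
    steinberg_aux (F.ncard) F hF le_rfl G hG ⊤ (fun S _ => le_top)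
  exact ⟨B, hBli, hBspan, hBF, fun S hS => by rw [hBG S hS, inf_top_eq]⟩
end
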